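/- arXiv:2509.22741 — 4 statements merged into one kernel-verified Lean document; each statement's English description precedes it below -/
import Mathlib

section
/- For all δ ∈ (0,1) and t ∈ (0,1], the inequality (1+δ)(1−e^{−2t}) ≤ (1+2δt)(1−e^{−(2+2δ)t}) holds. -/
/-- For all `δ ∈ (0,1)` and `t ∈ (0,1]`,
`(1+δ)(1−e^{−2t}) ≤ (1+2δt)(1−e^{−(2+2δ)t})`. -/
theorem exp_ratio_ineq (δ t : ℝ) (hδ0 : 0 < δ) (hδ1 : δ < 1) (ht0 : 0 < t) (ht1 : t ≤ 1) :
    (1 + δ) * (1 - Real.exp (-2 * t)) ≤ (1 + 2 * δ * t) * (1 - Real.exp (-(2 + 2 * δ) * t)) := by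
  have e1 := Real.add_one_le_exp (2*δ*t)
  have e2 := Real.add_one_le_exp (-2*t)
  have e3 : Real.exp (-(2+2*δ)*t) * Real.exp (2*δ*t) = Real.exp (-2*t) := by
    rw [← Real.exp_add]; ring_nf
  have p : (0:ℝ) < Real.exp (-(2+2*δ)*t) := Real.exp_pos _
  nlinarith [mul_le_mul_of_nonneg_left e1 p.le, mul_le_mul_of_nonneg_left e2 hδ0.le]
end

section
/- Let Γ(t) = (1−e^{−2t})/2 and Γ̄(t) = (1−e^{−(2+2δ)t})/(2+2δ) for δ ∈ (0,1). Then for all t > 0: 0 ≤ Γ(t)/Γ̄(t) − 1 ≤ 2δ·min(1, t). -/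
/-- For `δ ∈ (0,1)`, `t > 0`, with `Γ(t) = (1−e^{−2t})/2` and
`Γ̄(t) = (1−e^{−(2+2δ)t})/(2+2δ)`, one has `0 ≤ Γ(t)/Γ̄(t) − 1 ≤ 2δ·min(1,t)`. -/
theorem gamma_ratio_bound (δ t : ℝ) (hδ0 : 0 < δ) (hδ1 : δ < 1) (ht : 0 < t) :
    0 ≤ (1 - Real.exp (-2 * t)) / 2 / ((1 - Real.exp (-(2 + 2 * δ) * t)) / (2 + 2 * δ)) - 1 ∧
    (1 - Real.exp (-2 * t)) / 2 / ((1 - Real.exp (-(2 + 2 * δ) * t)) / (2 + 2 * δ)) - 1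
      ≤ 2 * δ * min 1 t := by
  set x : ℝ := Real.exp (-2 * t) with hx
  have hx0 : 0 < x := Real.exp_pos _
  have hx1 : x < 1 := by
    rw [hx, Real.exp_lt_one_iff]; nlinarith
  -- express the second exponential as a power of x
  have hb : Real.exp (-(2 + 2 * δ) * t) = x ^ (1 + δ) := by
    rw [hx, ← Real.exp_mul]; ring_nf
  have hxd0 : (0:ℝ) < x ^ δ := Real.rpow_pos_of_pos hx0 _
  have hxd1 : x ^ δ < 1 := Real.rpow_lt_one hx0.le hx1 hδ0
  have hsplit : x ^ (1 + δ) = x * x ^ δ := by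
    rw [Real.rpow_add hx0, Real.rpow_one]
  have hb0 : 0 < x ^ (1 + δ) := Real.rpow_pos_of_pos hx0 _
  have hb1 : x ^ (1 + δ) < 1 := Real.rpow_lt_one hx0.le hx1 (by linarith)
  -- Bernoulli, p = 1 + δ ≥ 1 : 1 + (1+δ)(x-1) ≤ x^(1+δ)
  have hBern1 : 1 + (1 + δ) * (x - 1) ≤ x ^ (1 + δ) := by
    have := one_add_mul_self_le_rpow_one_add (s := x - 1) (by linarith) (p := 1 + δ) (by linarith)
    simpa using this
  -- Bernoulli, p = δ ≤ 1 : x^δ ≤ 1 + δ(x-1)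
  have hBern2 : x ^ δ ≤ 1 + δ * (x - 1) := by
    have := rpow_one_add_le_one_add_mul_self (s := x - 1) (by linarith) (p := δ) hδ0.le hδ1.le
    simpa using this
  have hδt : 0 < 2 + 2 * δ := by linarith
  have hden : 0 < 1 - x ^ (1 + δ) := by linarith
  -- rewrite the ratio
  have hR : (1 - x) / 2 / ((1 - x ^ (1 + δ)) / (2 + 2 * δ))
      = (1 + δ) * (1 - x) / (1 - x ^ (1 + δ)) := by
    field_simp
  rw [hb, hR]
  have hkey2 : δ * (1 - x) * (x ^ (1 + δ)) ≤ x - x ^ (1 + δ) := by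
    rw [hsplit]
    have h1 : δ * (1 - x) ≤ 1 - x ^ δ := by linarith
    have h2 : x * (δ * (1 - x)) ≤ x * (1 - x ^ δ) := mul_le_mul_of_nonneg_left h1 hx0.le
    nlinarith [mul_nonneg (mul_nonneg (mul_nonneg hδ0.le (by linarith : (0:ℝ) ≤ 1 - x)) hx0.le) (by linarith : (0:ℝ) ≤ 1 - x ^ δ)]
  constructor
  · -- lower bound
    have h1 : 1 - x ^ (1 + δ) ≤ (1 + δ) * (1 - x) := by nlinarith [hBern1]
    have : 1 ≤ (1 + δ) * (1 - x) / (1 - x ^ (1 + δ)) := by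
      rw [le_div_iff₀ hden]; linarith
    linarith
  · -- upper bound: first show ratio - 1 ≤ δ * (1 - x)
    have hub : (1 + δ) * (1 - x) / (1 - x ^ (1 + δ)) - 1 ≤ δ * (1 - x) := by
      rw [sub_le_iff_le_add, div_le_iff₀ hden]
      nlinarith [hkey2]
    have hx2t : 1 - x ≤ 2 * t := by
      have := Real.add_one_le_exp (-2 * t)
      nlinarith
    rcases le_total t 1 with h | h
    · rw [min_eq_right h]
      nlinarith
    · rw [min_eq_left h]
      nlinarith
end

section
/- Let h > 0 and A ∈ ℝ^{d×d} with ‖A‖h ≤ 1/15. Define A_h = ∫₀^h e^{At} dt. Then ‖A_h − hI‖ ≤ ∫₀^h (e^{‖A‖t} − 1) dt ≤ h/20, and A_h is invertible with ‖A_h^{−1}‖ ≤ (20/19)/h. -/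
open NormedSpace

lemma my_hasSum_exp_sub_one {𝔸 : Type*} [NormedRing 𝔸] [NormedAlgebra ℝ 𝔸] [CompleteSpace 𝔸]
    (x : 𝔸) : HasSum (fun n : ℕ => (((n+1).factorial : ℝ)⁻¹) • x ^ (n+1)) (exp x - 1) := by
  have h := (expSeries_summable' (𝕂 := ℝ) x).hasSum
  have he : exp x = ∑' (b : ℕ), ((b.factorial : ℝ))⁻¹ • x ^ b := by
    rw [exp_eq_tsum ℝ]
  rw [← he] at h
  have h2 := (hasSum_nat_add_iff' (f := fun n : ℕ => ((n.factorial : ℝ)⁻¹) • x ^ n) 1).mpr h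
  simpa using h2

lemma my_norm_exp_sub_one_le {𝔸 : Type*} [NormedRing 𝔸] [NormedAlgebra ℝ 𝔸] [CompleteSpace 𝔸]
    (x : 𝔸) : ‖exp x - 1‖ ≤ Real.exp ‖x‖ - 1 := by
  have hg : HasSum (fun n : ℕ => (((n+1).factorial : ℝ)⁻¹) • ‖x‖ ^ (n+1)) (Real.exp ‖x‖ - 1) := by
    have := my_hasSum_exp_sub_one (𝔸 := ℝ) ‖x‖
    rwa [Real.exp_eq_exp_ℝ]
  rw [← (my_hasSum_exp_sub_one x).tsum_eq]
  refine tsum_of_norm_bounded hg fun n => ?_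
  rw [norm_smul, Real.norm_eq_abs, abs_of_nonneg (by positivity), smul_eq_mul]
  gcongr
  exact norm_pow_le' x n.succ_pos

lemma my_exp_quad_bound {x : ℝ} (h0 : 0 ≤ x) (h1 : x ≤ 1) :
    Real.exp x - 1 ≤ x + 3/4 * x^2 := by
  have hx1 : |x| ≤ 1 := by rwa [abs_of_nonneg h0]
  have hbd := Real.exp_bound hx1 (n := 2) (by norm_num)
  have hsum : (∑ i ∈ Finset.range 2, x^i / i.factorial) = 1 + x := by
    simp [Finset.sum_range_succ]
  rw [hsum, sq_abs] at hbd
  have hb2 := (abs_le.mp hbd).2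
  norm_num at hb2 ⊢
  nlinarith [hb2]

set_option maxHeartbeats 1000000 in
set_option synthInstance.maxHeartbeats 400000 in
/-- Let `h > 0` and `A` with `‖A‖h ≤ 1/15`. With `A_h = ∫₀^h e^{At} dt`, we have
`‖A_h − hI‖ ≤ ∫₀^h (e^{‖A‖t} − 1) dt ≤ h/20`, and `A_h` is invertible with
`‖A_h⁻¹‖ ≤ (20/19)/h`. -/
theorem integral_exp_invertible (d : ℕ)
    (A : EuclideanSpace ℝ (Fin d) →L[ℝ] EuclideanSpace ℝ (Fin d)) (h : ℝ)
    (hh : 0 < h) (hA : ‖A‖ * h ≤ 1/15) :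
    ‖(∫ t in (0:ℝ)..h, exp (t • A)) - h • (1 : EuclideanSpace ℝ (Fin d) →L[ℝ]
        EuclideanSpace ℝ (Fin d))‖ ≤ ∫ t in (0:ℝ)..h, (Real.exp (‖A‖ * t) - 1) ∧
    (∫ t in (0:ℝ)..h, (Real.exp (‖A‖ * t) - 1)) ≤ h / 20 ∧
    ∃ B : EuclideanSpace ℝ (Fin d) →L[ℝ] EuclideanSpace ℝ (Fin d),
      (∫ t in (0:ℝ)..h, exp (t • A)) * B = 1 ∧ B * (∫ t in (0:ℝ)..h, exp (t • A)) = 1 ∧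
      ‖B‖ ≤ (20/19) / h := by
  have ha0 : 0 ≤ ‖A‖ := norm_nonneg A
  have hfc : Continuous fun t : ℝ => exp (t • A) :=
    (continuous_iff_continuousAt.2 fun x => (exp_analytic (𝕂 := ℝ) x).continuousAt).comp (continuous_id.smul continuous_const)
  have hfint : IntervalIntegrable (fun t : ℝ => exp (t • A)) MeasureTheory.volume 0 h :=
    hfc.intervalIntegrable 0 h
  have hgc : Continuous fun t : ℝ => Real.exp (‖A‖ * t) - 1 :=
    (Real.continuous_exp.comp (continuous_const.mul continuous_id)).sub continuous_const
  have hgint : IntervalIntegrable (fun t : ℝ => Real.exp (‖A‖ * t) - 1)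
      MeasureTheory.volume 0 h := hgc.intervalIntegrable 0 h
  have part1 : ‖(∫ t in (0:ℝ)..h, exp (t • A)) - h • (1 : EuclideanSpace ℝ (Fin d) →L[ℝ]
        EuclideanSpace ℝ (Fin d))‖ ≤
      ∫ t in (0:ℝ)..h, (Real.exp (‖A‖ * t) - 1) := by
    have hconst : (∫ _t in (0:ℝ)..h, (1 : EuclideanSpace ℝ (Fin d) →L[ℝ]
        EuclideanSpace ℝ (Fin d))) = h • 1 := by
      rw [intervalIntegral.integral_const, sub_zero]
    rw [← hconst, ← intervalIntegral.integral_sub hfint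
      ((continuous_const (y := (1 : EuclideanSpace ℝ (Fin d) →L[ℝ]
        EuclideanSpace ℝ (Fin d)))).intervalIntegrable 0 h)]
    have hb : ∀ t ∈ Set.uIoc (0:ℝ) h, ‖exp (t • A) - (1 : EuclideanSpace ℝ (Fin d) →L[ℝ]
        EuclideanSpace ℝ (Fin d))‖ ≤ Real.exp (‖A‖ * t) - 1 := by
      intro t ht
      rw [Set.uIoc_of_le hh.le] at ht
      refine (my_norm_exp_sub_one_le (t • A)).trans ?_
      have : ‖t • A‖ = ‖A‖ * t := by
        rw [norm_smul t A, Real.norm_eq_abs, abs_of_nonneg ht.1.le, mul_comm]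
      rw [this]
    calc ‖∫ t in (0:ℝ)..h, (exp (t • A) - 1)‖
        ≤ |∫ t in (0:ℝ)..h, (Real.exp (‖A‖ * t) - 1)| :=
          intervalIntegral.norm_integral_le_abs_of_norm_le
            (MeasureTheory.ae_restrict_of_forall_mem measurableSet_uIoc hb) hgint
      _ = ∫ t in (0:ℝ)..h, (Real.exp (‖A‖ * t) - 1) := by
          rw [abs_of_nonneg]
          refine intervalIntegral.integral_nonneg hh.le fun t ht => ?_
          have h1 : 0 ≤ ‖A‖ * t := mul_nonneg ha0 ht.1
          have := Real.one_le_exp h1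
          linarith
  have part2 : (∫ t in (0:ℝ)..h, (Real.exp (‖A‖ * t) - 1)) ≤ h / 20 := by
    have hpc : Continuous fun t : ℝ => ‖A‖ * t + 3/4 * (‖A‖ * t)^2 :=
      ((continuous_const.mul continuous_id).add
        (continuous_const.mul ((continuous_const.mul continuous_id).pow 2)))
    have hmono : (∫ t in (0:ℝ)..h, (Real.exp (‖A‖ * t) - 1)) ≤
        ∫ t in (0:ℝ)..h, (‖A‖ * t + 3/4 * (‖A‖ * t)^2) := by
      refine intervalIntegral.integral_mono_on hh.le hgint (hpc.intervalIntegrable 0 h) ?_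
      intro t ht
      have ht0 : 0 ≤ t := ht.1
      have hAt : ‖A‖ * t ≤ 1/15 := by
        calc ‖A‖ * t ≤ ‖A‖ * h := mul_le_mul_of_nonneg_left ht.2 ha0
          _ ≤ 1/15 := hA
      have := my_exp_quad_bound (mul_nonneg ha0 ht0) (by linarith)
      linarith
    have hval : (∫ t in (0:ℝ)..h, (‖A‖ * t + 3/4 * (‖A‖ * t)^2)) =
        ‖A‖ * (h^2/2) + 3/4 * ‖A‖^2 * (h^3/3) := by
      have i1 : IntervalIntegrable (fun t : ℝ => ‖A‖ * t) MeasureTheory.volume 0 h :=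
        (by fun_prop : Continuous fun t : ℝ => ‖A‖ * t).intervalIntegrable 0 h
      have i2 : IntervalIntegrable (fun t : ℝ => 3/4 * (‖A‖ * t)^2)
          MeasureTheory.volume 0 h :=
        (by fun_prop : Continuous fun t : ℝ => 3/4 * (‖A‖ * t)^2).intervalIntegrable 0 h
      rw [intervalIntegral.integral_add i1 i2]
      have e1 : (∫ t in (0:ℝ)..h, ‖A‖ * t) = ‖A‖ * (h^2/2) := by
        rw [intervalIntegral.integral_const_mul, integral_id]; ring
      have e2 : (∫ t in (0:ℝ)..h, 3/4 * (‖A‖ * t)^2) = 3/4 * ‖A‖^2 * (h^3/3) := by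
        have hrw : ∀ t : ℝ, 3/4 * (‖A‖ * t)^2 = (3/4 * ‖A‖^2) * t^2 := fun t => by ring
        simp_rw [hrw]
        rw [intervalIntegral.integral_const_mul, integral_pow]
        norm_num
      rw [e1, e2]
    rw [hval] at hmono
    refine hmono.trans ?_
    have hy : 0 ≤ ‖A‖ * h := mul_nonneg ha0 hh.le
    have hkey : (‖A‖*h)/2 + (‖A‖*h)^2/4 ≤ 1/20 := by
      nlinarith [mul_le_mul_of_nonneg_left hA hy]
    calc ‖A‖ * (h^2/2) + 3/4 * ‖A‖^2 * (h^3/3)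
        = h * ((‖A‖*h)/2 + (‖A‖*h)^2/4) := by ring
      _ ≤ h * (1/20) := mul_le_mul_of_nonneg_left hkey hh.le
      _ = h / 20 := by ring
  refine ⟨part1, part2, ?_⟩
  set Ah : EuclideanSpace ℝ (Fin d) →L[ℝ] EuclideanSpace ℝ (Fin d) :=
    ∫ t in (0:ℝ)..h, exp (t • A) with hAh
  have hdist : ‖Ah - h • 1‖ ≤ h / 20 := part1.trans part2
  set t0 : EuclideanSpace ℝ (Fin d) →L[ℝ] EuclideanSpace ℝ (Fin d) :=
    1 - h⁻¹ • Ah with ht0def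
  have ht0norm : ‖t0‖ ≤ 1/20 := by
    have heq : (-h⁻¹) • (Ah - h • (1 : EuclideanSpace ℝ (Fin d) →L[ℝ] EuclideanSpace ℝ (Fin d))) = t0 := by
      rw [ht0def, neg_smul h⁻¹ (Ah - h • (1 : EuclideanSpace ℝ (Fin d) →L[ℝ] EuclideanSpace ℝ (Fin d))), smul_sub h⁻¹ Ah (h • (1 : EuclideanSpace ℝ (Fin d) →L[ℝ] EuclideanSpace ℝ (Fin d))),
        smul_smul h⁻¹ h (1 : EuclideanSpace ℝ (Fin d) →L[ℝ] EuclideanSpace ℝ (Fin d)), inv_mul_cancel₀ hh.ne', one_smul ℝ (1 : EuclideanSpace ℝ (Fin d) →L[ℝ] EuclideanSpace ℝ (Fin d)), neg_sub]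
    rw [← heq, norm_smul (-h⁻¹) (Ah - h • (1 : EuclideanSpace ℝ (Fin d) →L[ℝ]
      EuclideanSpace ℝ (Fin d))), Real.norm_eq_abs, abs_neg,
      abs_of_nonneg (inv_nonneg.mpr hh.le)]
    calc h⁻¹ * ‖Ah - h • 1‖ ≤ h⁻¹ * (h/20) :=
          mul_le_mul_of_nonneg_left hdist (inv_nonneg.mpr hh.le)
      _ = 1/20 := by field_simp
  have ht0lt : ‖t0‖ < 1 := ht0norm.trans_lt (by norm_num)
  set u := Units.oneSub t0 ht0lt with hu
  have huval : (u : EuclideanSpace ℝ (Fin d) →L[ℝ] EuclideanSpace ℝ (Fin d)) = h⁻¹ • Ah := by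
    rw [hu, Units.val_oneSub, ht0def, sub_sub_cancel]
  have hAhu : Ah = h • (u : EuclideanSpace ℝ (Fin d) →L[ℝ] EuclideanSpace ℝ (Fin d)) := by
    rw [huval, smul_smul, mul_inv_cancel₀ hh.ne', one_smul]
  refine ⟨h⁻¹ • (↑u⁻¹ : EuclideanSpace ℝ (Fin d) →L[ℝ] EuclideanSpace ℝ (Fin d)), ?_, ?_, ?_⟩
  · rw [hAhu]
    ext x
    have hux : (u : EuclideanSpace ℝ (Fin d) →L[ℝ] EuclideanSpace ℝ (Fin d)) ((↑u⁻¹ : EuclideanSpace ℝ (Fin d) →L[ℝ] EuclideanSpace ℝ (Fin d)) x) = x := by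
      have h1 : (u : EuclideanSpace ℝ (Fin d) →L[ℝ] EuclideanSpace ℝ (Fin d)) * (↑u⁻¹ : EuclideanSpace ℝ (Fin d) →L[ℝ] EuclideanSpace ℝ (Fin d)) = 1 := u.mul_inv
      calc (u : EuclideanSpace ℝ (Fin d) →L[ℝ] EuclideanSpace ℝ (Fin d)) ((↑u⁻¹ : EuclideanSpace ℝ (Fin d) →L[ℝ] EuclideanSpace ℝ (Fin d)) x) = ((u : EuclideanSpace ℝ (Fin d) →L[ℝ] EuclideanSpace ℝ (Fin d)) * (↑u⁻¹ : EuclideanSpace ℝ (Fin d) →L[ℝ] EuclideanSpace ℝ (Fin d))) x := rfl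
        _ = x := by rw [h1]; rfl
    simp [ContinuousLinearMap.mul_apply, smul_smul, hux, mul_inv_cancel₀ hh.ne']
    field_simp
  · rw [hAhu]
    ext x
    have hux : (↑u⁻¹ : EuclideanSpace ℝ (Fin d) →L[ℝ] EuclideanSpace ℝ (Fin d)) ((u : EuclideanSpace ℝ (Fin d) →L[ℝ] EuclideanSpace ℝ (Fin d)) x) = x := by
      have h1 : (↑u⁻¹ : EuclideanSpace ℝ (Fin d) →L[ℝ] EuclideanSpace ℝ (Fin d)) * (u : EuclideanSpace ℝ (Fin d) →L[ℝ] EuclideanSpace ℝ (Fin d)) = 1 := u.inv_mul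
      calc (↑u⁻¹ : EuclideanSpace ℝ (Fin d) →L[ℝ] EuclideanSpace ℝ (Fin d)) ((u : EuclideanSpace ℝ (Fin d) →L[ℝ] EuclideanSpace ℝ (Fin d)) x) = ((↑u⁻¹ : EuclideanSpace ℝ (Fin d) →L[ℝ] EuclideanSpace ℝ (Fin d)) * (u : EuclideanSpace ℝ (Fin d) →L[ℝ] EuclideanSpace ℝ (Fin d))) x := rfl
        _ = x := by rw [h1]; rfl
    simp [ContinuousLinearMap.mul_apply, smul_smul, hux, inv_mul_cancel₀ hh.ne']
    field_simp
  · have hinv : ‖(↑u⁻¹ : EuclideanSpace ℝ (Fin d) →L[ℝ] EuclideanSpace ℝ (Fin d))‖ ≤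
        (1 - ‖t0‖)⁻¹ := by
      have hgeo : HasSum (fun n : ℕ => ‖t0‖ ^ n) (1 - ‖t0‖)⁻¹ :=
        hasSum_geometric_of_lt_one (norm_nonneg _) ht0lt
      have hueq : (↑u⁻¹ : EuclideanSpace ℝ (Fin d) →L[ℝ] EuclideanSpace ℝ (Fin d)) =
          ∑' n : ℕ, t0 ^ n := rfl
      rw [hueq]
      refine tsum_of_norm_bounded hgeo fun n => ?_
      cases n with
      | zero =>
        rw [pow_zero, pow_zero]
        exact ContinuousLinearMap.norm_id_le
      | succ n => exact norm_pow_le' t0 n.succ_pos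
    rw [norm_smul h⁻¹ (↑u⁻¹ : EuclideanSpace ℝ (Fin d) →L[ℝ] EuclideanSpace ℝ (Fin d)),
      Real.norm_eq_abs, abs_of_nonneg (inv_nonneg.mpr hh.le)]
    have h19 : (1 - ‖t0‖)⁻¹ ≤ 20/19 := by
      rw [inv_le_comm₀ (by linarith) (by norm_num)]
      linarith
    calc h⁻¹ * ‖(↑u⁻¹ : EuclideanSpace ℝ (Fin d) →L[ℝ] EuclideanSpace ℝ (Fin d))‖
        ≤ h⁻¹ * (20/19) :=
          mul_le_mul_of_nonneg_left (hinv.trans h19) (inv_nonneg.mpr hh.le)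
      _ = 20/19/h := by rw [div_div, eq_div_iff (by positivity : (19:ℝ)*h ≠ 0)]; field_simp
end

section
/- Let g and ḡ be two probability densities on a measurable space, let E be a measurable set with ∫_E g ≥ 1/2 and ḡ(x) ≥ e^{−3} g(x) for all x ∈ E, and let A, Ā be two real numbers with |A − Ā| = 1/(5√T). Then for any measurable estimator φ, max{ P_{X∼g}(|φ(X) − A| ≥ 1/(10√T)), P_{X∼ḡ}(|φ(X) − Ā| ≥ 1/(10√T)) } ≥ 1/(4e³). -/
open MeasureTheory

/-- Two-point lower bound: if `g, ḡ` are densities, `E` a measurable set with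
`∫_E g ≥ 1/2` and `ḡ ≥ e^{−3} g` on `E`, and `|A − Ā| = 1/(5√T)`, then for any
measurable estimator `φ`,
`max{ P_{X∼g}(|φ(X) − A| ≥ 1/(10√T)), P_{X∼ḡ}(|φ(X) − Ā| ≥ 1/(10√T)) } ≥ 1/(4e³)`. -/
theorem estimation_lower_bound {Ω : Type*} [MeasurableSpace Ω] (ν : Measure Ω)
    (g gb : Ω → ℝ) (hg0 : ∀ x, 0 ≤ g x) (hgb0 : ∀ x, 0 ≤ gb x)
    (hgmeas : Measurable g) (hgbmeas : Measurable gb)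
    (hgint : Integrable g ν) (hgbint : Integrable gb ν)
    (E : Set Ω) (hE : MeasurableSet E)
    (hEg : 1/2 ≤ ∫ x in E, g x ∂ν)
    (hratio : ∀ x ∈ E, Real.exp (-3) * g x ≤ gb x)
    (T : ℝ) (hT : 0 < T) (A Ab : ℝ) (hAAb : |A - Ab| = 1 / (5 * Real.sqrt T))
    (φ : Ω → ℝ) (hφ : Measurable φ) :
    1 / (4 * Real.exp 3) ≤
      max (∫ x in {x | 1 / (10 * Real.sqrt T) ≤ |φ x - A|}, g x ∂ν)
          (∫ x in {x | 1 / (10 * Real.sqrt T) ≤ |φ x - Ab|}, gb x ∂ν) := by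
  have hsT : 0 < Real.sqrt T := Real.sqrt_pos.mpr hT
  set ε : ℝ := 1 / (10 * Real.sqrt T) with hεdef
  set S1 : Set Ω := {x | ε ≤ |φ x - A|} with hS1def
  set S2 : Set Ω := {x | ε ≤ |φ x - Ab|} with hS2def
  have hS1meas : MeasurableSet S1 := by
    have : Measurable fun x => |φ x - A| := (hφ.sub measurable_const).abs
    exact measurableSet_le measurable_const this
  have hS2meas : MeasurableSet S2 := by
    have : Measurable fun x => |φ x - Ab| := (hφ.sub measurable_const).abs
    exact measurableSet_le measurable_const this
  -- cover
  have hcover : ∀ x, x ∈ S1 ∨ x ∈ S2 := by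
    intro x
    by_contra h
    push_neg at h
    obtain ⟨h1, h2⟩ := h
    simp only [hS1def, hS2def, Set.mem_setOf_eq, not_le] at h1 h2
    have : |A - Ab| < 2 * ε := by
      calc |A - Ab| ≤ |A - φ x| + |φ x - Ab| := abs_sub_le A (φ x) Ab
        _ = |φ x - A| + |φ x - Ab| := by rw [abs_sub_comm]
        _ < ε + ε := add_lt_add h1 h2
        _ = 2 * ε := by ring
    rw [hAAb] at this
    have h2ε : 2 * ε = 1 / (5 * Real.sqrt T) := by
      rw [hεdef]; field_simp; ring
    rw [h2ε] at this
    exact lt_irrefl _ this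
  -- split ∫_E g
  have hint1 : (∫ x in E, g x ∂ν)
      = (∫ x in E ∩ S1, g x ∂ν) + (∫ x in E ∩ S1ᶜ, g x ∂ν) := by
    rw [← integral_inter_add_diff hS1meas hgint.integrableOn, Set.diff_eq]
  have hsub : E ∩ S1ᶜ ⊆ E ∩ S2 := by
    intro x hx
    exact ⟨hx.1, (hcover x).resolve_left hx.2⟩
  have hmono2 : (∫ x in E ∩ S1ᶜ, g x ∂ν) ≤ ∫ x in E ∩ S2, g x ∂ν := by
    apply setIntegral_mono_set hgint.integrableOn
    · exact Filter.Eventually.of_forall fun x => hg0 x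
    · exact HasSubset.Subset.eventuallyLE hsub
  have hmono1 : (∫ x in E ∩ S1, g x ∂ν) ≤ ∫ x in S1, g x ∂ν := by
    apply setIntegral_mono_set hgint.integrableOn
    · exact Filter.Eventually.of_forall fun x => hg0 x
    · exact HasSubset.Subset.eventuallyLE Set.inter_subset_right
  have hkey : 1/2 ≤ (∫ x in S1, g x ∂ν) + (∫ x in E ∩ S2, g x ∂ν) := by
    calc (1:ℝ)/2 ≤ ∫ x in E, g x ∂ν := hEg
      _ = (∫ x in E ∩ S1, g x ∂ν) + (∫ x in E ∩ S1ᶜ, g x ∂ν) := hint1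
      _ ≤ (∫ x in S1, g x ∂ν) + (∫ x in E ∩ S2, g x ∂ν) := add_le_add hmono1 hmono2
  have hquarter : 1/4 ≤ (∫ x in S1, g x ∂ν) ∨ 1/4 ≤ (∫ x in E ∩ S2, g x ∂ν) := by
    by_contra h
    push_neg at h
    linarith [hkey, h.1, h.2]
  have hexp3 : (0:ℝ) < Real.exp 3 := Real.exp_pos 3
  have hbound : 1 / (4 * Real.exp 3) = Real.exp (-3) * (1/4) := by
    rw [Real.exp_neg]; field_simp
  rcases hquarter with h | h
  · apply le_trans _ (le_max_left _ _)
    calc 1 / (4 * Real.exp 3) ≤ 1/4 := by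
          rw [div_le_div_iff₀ (by positivity) (by norm_num)]
          nlinarith [Real.one_le_exp (by norm_num : (0:ℝ) ≤ 3)]
      _ ≤ ∫ x in S1, g x ∂ν := h
  · apply le_trans _ (le_max_right _ _)
    have hgb : Real.exp (-3) * (∫ x in E ∩ S2, g x ∂ν) ≤ ∫ x in E ∩ S2, gb x ∂ν := by
      rw [← integral_const_mul]
      apply setIntegral_mono_on
      · exact (hgint.const_mul _).integrableOn
      · exact hgbint.integrableOn
      · exact hE.inter hS2meas
      · intro x hx; exact hratio x hx.1
    calc 1 / (4 * Real.exp 3) = Real.exp (-3) * (1/4) := hbound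
      _ ≤ Real.exp (-3) * (∫ x in E ∩ S2, g x ∂ν) := by
          apply mul_le_mul_of_nonneg_left h (Real.exp_nonneg _)
      _ ≤ ∫ x in E ∩ S2, gb x ∂ν := hgb
      _ ≤ ∫ x in S2, gb x ∂ν := by
          apply setIntegral_mono_set hgbint.integrableOn
          · exact Filter.Eventually.of_forall fun x => hgb0 x
          · exact HasSubset.Subset.eventuallyLE Set.inter_subset_right
end
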